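/- Let n be a positive integer and v : ℝ → Matrix (Fin n) (Fin n) ℂ be continuously differentiable (of class C¹). Then for every x ∈ ℝ and every s ∈ ℝ, writing ⁅a,b⁆ := a*b − b*a, one has ⁅v x, (deriv (fun y => Matrix.exp (s • v y)) x) * Matrix.exp (−(s • v x))⁆ = Matrix.exp (s • v x) * (deriv v x) * Matrix.exp (−(s • v x)) − deriv v x. -/

import Mathlib

attribute [local instance] Matrix.linftyOpNormedRing Matrix.linftyOpNormedAlgebra

open NormedSpace Metric
open scoped Nat

namespace Stmt4Aux

/-- Master summability lemma: `k^m c^k / k!` is summable for `c ≥ 0`. -/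
lemma summable_master (m : ℕ) {c : ℝ} (hc : 0 ≤ c) :
    Summable (fun k : ℕ => (k : ℝ) ^ m * c ^ k / (k ! : ℝ)) := by
  refine Summable.of_nonneg_of_le (fun k => by positivity) (fun k => ?_)
    (Real.summable_pow_div_factorial ((2 : ℝ) ^ m * c))
  have hk : (k : ℝ) ≤ 2 ^ k := by exact_mod_cast (Nat.lt_two_pow_self (n := k)).le
  have h1 : (k : ℝ) ^ m ≤ ((2 : ℝ) ^ k) ^ m := by
    gcongr
  calc (k : ℝ) ^ m * c ^ k / (k ! : ℝ) ≤ ((2 : ℝ) ^ k) ^ m * c ^ k / (k ! : ℝ) := by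
        gcongr
    _ = ((2 : ℝ) ^ m * c) ^ k / (k ! : ℝ) := by
        rw [mul_pow, ← pow_mul, ← pow_mul, Nat.mul_comm]

/-- Arithmetic bound used for the series of `y`-derivatives. -/
lemma coef_bound {a b N C : ℝ} (k : ℕ) (ha : 0 ≤ a) (hab : a ≤ b) (hN1 : 1 ≤ N) (hC : 0 ≤ C) :
    (k ! : ℝ)⁻¹ * a ^ k * ((k : ℝ) * (N ^ (k - 1) * C)) ≤
      C * ((k : ℝ) ^ 2 * (b * N) ^ k / (k ! : ℝ)) := by
  have hN0 : (0:ℝ) ≤ N := zero_le_one.trans hN1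
  have hb : 0 ≤ b := ha.trans hab
  have hfac : (0:ℝ) ≤ (k ! : ℝ)⁻¹ := by positivity
  have e1 : (k : ℝ) ≤ (k : ℝ) ^ 2 := by
    have : k ≤ k ^ 2 := Nat.le_self_pow two_ne_zero k
    exact_mod_cast this
  have e2 : a ^ k ≤ b ^ k := pow_le_pow_left₀ ha hab k
  have e3 : N ^ (k - 1) ≤ N ^ k := pow_le_pow_right₀ hN1 (Nat.sub_le k 1)
  have h4 : (k ! : ℝ)⁻¹ * a ^ k * ((k : ℝ) * (N ^ (k - 1) * C)) ≤
      (k ! : ℝ)⁻¹ * b ^ k * ((k : ℝ) ^ 2 * (N ^ k * C)) := by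
    refine mul_le_mul (mul_le_mul le_rfl e2 (pow_nonneg ha k) hfac)
      (mul_le_mul e1 (mul_le_mul e3 le_rfl hC (pow_nonneg hN0 k)) ?_ ?_) ?_ ?_
    · exact mul_nonneg (pow_nonneg hN0 _) hC
    · exact pow_nonneg (by positivity) 2
    · exact mul_nonneg (Nat.cast_nonneg k) (mul_nonneg (pow_nonneg hN0 _) hC)
    · exact mul_nonneg hfac (pow_nonneg hb k)
  calc (k ! : ℝ)⁻¹ * a ^ k * ((k : ℝ) * (N ^ (k - 1) * C))
      ≤ (k ! : ℝ)⁻¹ * b ^ k * ((k : ℝ) ^ 2 * (N ^ k * C)) := h4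
    _ = C * ((k : ℝ) ^ 2 * (b * N) ^ k / (k ! : ℝ)) := by rw [mul_pow]; ring

/-- Arithmetic bound used for the series of `s`-derivatives. -/
lemma coef_bound' {a r N C : ℝ} (k : ℕ) (ha : 0 ≤ a) (har : a ≤ r) (hr1 : 1 ≤ r)
    (hN1 : 1 ≤ N) (hC : 0 ≤ C) :
    (k ! : ℝ)⁻¹ * ((k : ℝ) * a ^ (k - 1)) * ((k : ℝ) * (N ^ (k - 1) * C)) ≤
      C * ((k : ℝ) ^ 2 * (r * N) ^ k / (k ! : ℝ)) := by
  have hN0 : (0:ℝ) ≤ N := zero_le_one.trans hN1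
  have hr0 : (0:ℝ) ≤ r := zero_le_one.trans hr1
  have hfac : (0:ℝ) ≤ (k ! : ℝ)⁻¹ := by positivity
  have e2 : a ^ (k - 1) ≤ r ^ k :=
    le_trans (pow_le_pow_left₀ ha har _) (pow_le_pow_right₀ hr1 (Nat.sub_le k 1))
  have e3 : N ^ (k - 1) ≤ N ^ k := pow_le_pow_right₀ hN1 (Nat.sub_le k 1)
  have h4 : (k ! : ℝ)⁻¹ * ((k : ℝ) * a ^ (k - 1)) * ((k : ℝ) * (N ^ (k - 1) * C)) ≤
      (k ! : ℝ)⁻¹ * ((k : ℝ) * r ^ k) * ((k : ℝ) * (N ^ k * C)) := by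
    refine mul_le_mul (mul_le_mul le_rfl (mul_le_mul le_rfl e2 (pow_nonneg ha _)
        (Nat.cast_nonneg k)) ?_ hfac)
      (mul_le_mul le_rfl (mul_le_mul e3 le_rfl hC (pow_nonneg hN0 k)) ?_ (Nat.cast_nonneg k)) ?_ ?_
    · exact mul_nonneg (Nat.cast_nonneg k) (pow_nonneg ha _)
    · exact mul_nonneg (pow_nonneg hN0 _) hC
    · exact mul_nonneg (Nat.cast_nonneg k) (mul_nonneg (pow_nonneg hN0 _) hC)
    · exact mul_nonneg hfac (mul_nonneg (Nat.cast_nonneg k) (pow_nonneg hr0 k))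
  calc (k ! : ℝ)⁻¹ * ((k : ℝ) * a ^ (k - 1)) * ((k : ℝ) * (N ^ (k - 1) * C))
      ≤ (k ! : ℝ)⁻¹ * ((k : ℝ) * r ^ k) * ((k : ℝ) * (N ^ k * C)) := h4
    _ = C * ((k : ℝ) ^ 2 * (r * N) ^ k / (k ! : ℝ)) := by rw [mul_pow]; ring

variable {𝔸 : Type*} [NormedRing 𝔸] [NormOneClass 𝔸] [NormedAlgebra ℝ 𝔸] [CompleteSpace 𝔸]

lemma commA_exp (A : 𝔸) (t : ℝ) : A * exp (t • A) = exp (t • A) * A :=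
  (((Commute.refl A).smul_right t).exp_right).eq

lemma commA_exp_neg (A : 𝔸) (t : ℝ) : A * exp (-(t • A)) = exp (-(t • A)) * A :=
  ((((Commute.refl A).smul_right t).neg_right).exp_right).eq

lemma exp_mul_exp_neg (A : 𝔸) (t : ℝ) : exp (t • A) * exp (-(t • A)) = 1 := by
  rw [← exp_add_of_commute_of_mem_ball (𝕂 := ℝ) ((Commute.refl (t • A)).neg_right)
    ((expSeries_radius_eq_top ℝ 𝔸).symm ▸ edist_lt_top _ _)
    ((expSeries_radius_eq_top ℝ 𝔸).symm ▸ edist_lt_top _ _), add_neg_cancel, exp_zero]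

lemma hasDerivAt_expE (A : 𝔸) (t : ℝ) :
    HasDerivAt (fun u : ℝ => exp (u • A)) (A * exp (t • A)) t :=
  hasDerivAt_exp_smul_const' A t

lemma hasDerivAt_expE_neg (A : 𝔸) (t : ℝ) :
    HasDerivAt (fun u : ℝ => exp (-(u • A))) (-(A * exp (-(t • A)))) t := by
  have h := hasDerivAt_exp_smul_const' (-A) t
  simp only [smul_neg, neg_mul] at h
  exact h

/-- Uniqueness for the linear ODE `Y' = [A, Y] + C`. -/
lemma eq_of_commutator_ode {A C : 𝔸} {L R : ℝ → 𝔸}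
    (hL : ∀ t, HasDerivAt L (A * L t - L t * A + C) t)
    (hR : ∀ t, HasDerivAt R (A * R t - R t * A + C) t)
    (h0 : L 0 = R 0) (s : ℝ) : L s = R s := by
  set X : ℝ → 𝔸 := fun t => L t - R t with hXdef
  have hX : ∀ t, HasDerivAt X (A * X t - X t * A) t := by
    intro t
    have h := (hL t).sub (hR t)
    refine h.congr_deriv ?_
    simp only [hXdef]
    noncomm_ring
  set W : ℝ → 𝔸 := fun t => exp (-(t • A)) * X t * exp (t • A) with hWdef
  have hW : ∀ t, HasDerivAt W 0 t := by
    intro t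
    have h := ((hasDerivAt_expE_neg A t).mul (hX t)).mul (hasDerivAt_expE A t)
    refine h.congr_deriv ?_
    rw [commA_exp_neg]
    simp only [Pi.mul_apply]
    noncomm_ring
  have hWc : W s = W 0 :=
    is_const_of_deriv_eq_zero (fun u => (hW u).differentiableAt) (fun u => (hW u).deriv) s 0
  have hW0 : W 0 = 0 := by
    simp [hWdef, hXdef, h0, exp_zero]
  have hXs : X s = 0 := by
    have h2 : exp (s • A) * W s * exp (-(s • A)) = X s := by
      simp only [hWdef]
      calc exp (s • A) * (exp (-(s • A)) * X s * exp (s • A)) * exp (-(s • A))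
          = (exp (s • A) * exp (-(s • A))) * X s *
              (exp (s • A) * exp (-(s • A))) := by noncomm_ring
        _ = X s := by rw [exp_mul_exp_neg]; simp
    rw [hWc, hW0] at h2
    simpa using h2.symm
  exact sub_eq_zero.mp hXs

lemma hasDerivAt_pow_comp {v : ℝ → 𝔸} (hv : Differentiable ℝ v) (k : ℕ) (y : ℝ) :
    HasDerivAt (fun z => v z ^ k)
      (∑ i ∈ Finset.range k, v y ^ i * deriv v y * v y ^ (k - 1 - i)) y := by
  induction k with
  | zero => simpa using hasDerivAt_const y (1 : 𝔸)
  | succ k ih =>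
    have hvy : HasDerivAt v (deriv v y) y := (hv y).hasDerivAt
    have h := ih.mul hvy
    simp only [Pi.mul_def, ← pow_succ] at h
    have hsum : (∑ i ∈ Finset.range (k + 1), v y ^ i * deriv v y * v y ^ (k + 1 - 1 - i))
        = (∑ i ∈ Finset.range k, v y ^ i * deriv v y * v y ^ (k - 1 - i)) * v y
          + v y ^ k * deriv v y := by
      rw [Finset.sum_range_succ, Finset.sum_mul]
      congr 1
      · refine Finset.sum_congr rfl fun i hi => ?_
        have hik : i < k := Finset.mem_range.mp hi
        have h2 : k + 1 - 1 - i = (k - 1 - i) + 1 := by omega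
        rw [h2, pow_succ, ← mul_assoc]
      · have h3 : k + 1 - 1 - k = 0 := by omega
        rw [h3, pow_zero, mul_one]
    rw [hsum]
    exact h

lemma norm_dsum_le (A B : 𝔸) {N C : ℝ} (hNA : ‖A‖ ≤ N) (hN1 : 1 ≤ N) (hC : ‖B‖ ≤ C) (k : ℕ) :
    ‖∑ i ∈ Finset.range k, A ^ i * B * A ^ (k - 1 - i)‖ ≤ (k : ℝ) * (N ^ (k - 1) * C) := by
  have hC0 : 0 ≤ C := le_trans (norm_nonneg _) hC
  have hN0 : (0:ℝ) ≤ N := zero_le_one.trans hN1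
  have hAi : ∀ m : ℕ, ‖A ^ m‖ ≤ N ^ m := fun m =>
    le_trans (norm_pow_le A m) (pow_le_pow_left₀ (norm_nonneg A) hNA m)
  calc ‖∑ i ∈ Finset.range k, A ^ i * B * A ^ (k - 1 - i)‖
      ≤ ∑ i ∈ Finset.range k, ‖A ^ i * B * A ^ (k - 1 - i)‖ := norm_sum_le _ _
    _ ≤ ∑ _i ∈ Finset.range k, N ^ (k - 1) * C := by
        refine Finset.sum_le_sum fun i hi => ?_
        have hik : i < k := Finset.mem_range.mp hi
        have h1 : ‖A ^ i * B * A ^ (k - 1 - i)‖ ≤ (N ^ i * C) * N ^ (k - 1 - i) := by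
          calc ‖A ^ i * B * A ^ (k - 1 - i)‖
              ≤ ‖A ^ i * B‖ * ‖A ^ (k - 1 - i)‖ := norm_mul_le _ _
            _ ≤ (‖A ^ i‖ * ‖B‖) * ‖A ^ (k - 1 - i)‖ :=
                mul_le_mul_of_nonneg_right (norm_mul_le _ _) (norm_nonneg _)
            _ ≤ (N ^ i * C) * N ^ (k - 1 - i) := by
                refine mul_le_mul (mul_le_mul (hAi i) hC (norm_nonneg _) (pow_nonneg hN0 i))
                  (hAi _) (norm_nonneg _) ?_
                exact mul_nonneg (pow_nonneg hN0 i) hC0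
        have h2 : (N ^ i * C) * N ^ (k - 1 - i) = N ^ (k - 1) * C := by
          rw [mul_right_comm, ← pow_add]
          congr 2
          omega
        rw [h2] at h1
        exact h1
    _ = (k : ℝ) * (N ^ (k - 1) * C) := by
        rw [Finset.sum_const, Finset.card_range, nsmul_eq_mul]

/-- The coefficient matrices of the series for the `y`-derivative of `exp (s • v y)`. -/
noncomputable def dd (A B : 𝔸) (k : ℕ) : 𝔸 :=
  ∑ i ∈ Finset.range k, A ^ i * B * A ^ (k - 1 - i)

/-- The `y`-derivative of `exp (s • v y)` at `y = x`, as a function of `s`. -/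
noncomputable def GG (A B : 𝔸) (t : ℝ) : 𝔸 :=
  ∑' k : ℕ, ((k ! : ℝ)⁻¹ * t ^ k) • dd A B k

lemma dd_zero (A B : 𝔸) : dd A B 0 = 0 := by simp [dd]

lemma dd_succ (A B : 𝔸) (k : ℕ) : dd A B (k + 1) = B * A ^ k + A * dd A B k := by
  rw [dd, Finset.sum_range_succ', add_comm]
  congr 1
  · simp
  · rw [dd, Finset.mul_sum]
    refine Finset.sum_congr rfl fun i hi => ?_
    have hik : i < k := Finset.mem_range.mp hi
    have h2 : k + 1 - 1 - (i + 1) = k - 1 - i := by omega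
    rw [h2, pow_succ']
    simp [mul_assoc]

lemma norm_dd_le (A B : 𝔸) {N C : ℝ} (hNA : ‖A‖ ≤ N) (hN1 : 1 ≤ N) (hC : ‖B‖ ≤ C) (k : ℕ) :
    ‖dd A B k‖ ≤ (k : ℝ) * (N ^ (k - 1) * C) :=
  norm_dsum_le A B hNA hN1 hC k

lemma summable_smul_dd (A B : 𝔸) (t : ℝ) :
    Summable (fun k : ℕ => ((k ! : ℝ)⁻¹ * t ^ k) • dd A B k) := by
  set N : ℝ := ‖A‖ + 1 with hN
  have hN1 : (1:ℝ) ≤ N := le_add_of_nonneg_left (norm_nonneg A)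
  have hNA : ‖A‖ ≤ N := by rw [hN]; linarith
  have hq0 : (0:ℝ) ≤ (|t| + 1) * N := by positivity
  refine Summable.of_norm_bounded ((summable_master 2 hq0).mul_left ‖B‖) fun k => ?_
  rw [norm_smul, Real.norm_eq_abs, abs_mul, abs_pow, abs_inv, abs_of_nonneg (by positivity :
    (0:ℝ) ≤ (k ! : ℝ))]
  calc (k ! : ℝ)⁻¹ * |t| ^ k * ‖dd A B k‖
      ≤ (k ! : ℝ)⁻¹ * |t| ^ k * ((k : ℝ) * (N ^ (k - 1) * ‖B‖)) := by
        refine mul_le_mul_of_nonneg_left (norm_dd_le A B hNA hN1 le_rfl k) ?_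
        positivity
    _ ≤ ‖B‖ * ((k : ℝ) ^ 2 * ((|t| + 1) * N) ^ k / (k ! : ℝ)) :=
        coef_bound k (abs_nonneg t) (by linarith [abs_nonneg t]) hN1 (norm_nonneg B)

lemma GG_zero (A B : 𝔸) : GG A B 0 = 0 := by
  rw [GG]
  have h : ∀ k : ℕ, ((k ! : ℝ)⁻¹ * (0:ℝ) ^ k) • dd A B k = 0 := by
    intro k
    cases k with
    | zero => simp [dd_zero]
    | succ m => simp [zero_pow (Nat.succ_ne_zero m)]
  rw [tsum_congr h, tsum_zero]

lemma exp_eq_tsum_smul (A : 𝔸) (t : ℝ) :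
    exp (t • A) = ∑' k : ℕ, ((k ! : ℝ)⁻¹ * t ^ k) • A ^ k := by
  rw [exp_eq_tsum ℝ]
  exact tsum_congr fun k => by rw [smul_pow, smul_smul]

lemma summable_exp_smul (A : 𝔸) (t : ℝ) :
    Summable (fun k : ℕ => ((k ! : ℝ)⁻¹ * t ^ k) • A ^ k) := by
  have h := expSeries_summable' (𝕂 := ℝ) (t • A)
  refine h.congr fun k => ?_
  rw [smul_pow, smul_smul]

/-- The derivative of `GG A B` in `s`:  `G' = B * exp(s A) + A * G`. -/
lemma hasDerivAt_GG (A B : 𝔸) (t : ℝ) :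
    HasDerivAt (GG A B) (B * exp (t • A) + A * GG A B t) t := by
  set N : ℝ := ‖A‖ + 1 with hN
  have hN1 : (1:ℝ) ≤ N := le_add_of_nonneg_left (norm_nonneg A)
  have hNA : ‖A‖ ≤ N := by rw [hN]; linarith
  set r : ℝ := |t| + 1 with hr
  have hr1 : (1:ℝ) ≤ r := le_add_of_nonneg_left (abs_nonneg t)
  have hq0 : (0:ℝ) ≤ r * N := by positivity
  set f' : ℕ → ℝ → 𝔸 := fun k u => ((k ! : ℝ)⁻¹ * ((k : ℝ) * u ^ (k - 1))) • dd A B k with hf'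
  set uu : ℕ → ℝ := fun k => ‖B‖ * ((k : ℝ) ^ 2 * (r * N) ^ k / (k ! : ℝ)) with huu
  have husum : Summable uu := (summable_master 2 hq0).mul_left ‖B‖
  have hder : ∀ (k : ℕ) (u : ℝ), u ∈ ball (0:ℝ) r →
      HasDerivAt (fun w => ((k ! : ℝ)⁻¹ * w ^ k) • dd A B k) (f' k u) u := by
    intro k u _
    exact ((hasDerivAt_pow k u).const_mul ((k ! : ℝ)⁻¹)).smul_const (dd A B k)
  have hbound : ∀ (k : ℕ) (u : ℝ), u ∈ ball (0:ℝ) r → ‖f' k u‖ ≤ uu k := by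
    intro k u hu
    have hu' : |u| ≤ r := by
      have := mem_ball_iff_norm.mp hu
      rw [sub_zero, Real.norm_eq_abs] at this
      linarith
    simp only [hf', huu]
    rw [norm_smul, Real.norm_eq_abs, abs_mul, abs_mul, abs_inv,
      abs_of_nonneg (by positivity : (0:ℝ) ≤ (k ! : ℝ)),
      abs_of_nonneg (Nat.cast_nonneg k : (0:ℝ) ≤ (k:ℝ)), abs_pow]
    calc (k ! : ℝ)⁻¹ * ((k : ℝ) * |u| ^ (k - 1)) * ‖dd A B k‖
        ≤ (k ! : ℝ)⁻¹ * ((k : ℝ) * |u| ^ (k - 1)) * ((k : ℝ) * (N ^ (k - 1) * ‖B‖)) := by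
          refine mul_le_mul_of_nonneg_left (norm_dd_le A B hNA hN1 le_rfl k) ?_
          positivity
      _ ≤ ‖B‖ * ((k : ℝ) ^ 2 * (r * N) ^ k / (k ! : ℝ)) :=
          coef_bound' k (abs_nonneg u) hu' hr1 hN1 (norm_nonneg B)
  have h0sum : Summable (fun k : ℕ => ((k ! : ℝ)⁻¹ * (0:ℝ) ^ k) • dd A B k) := by
    have h : (fun k : ℕ => ((k ! : ℝ)⁻¹ * (0:ℝ) ^ k) • dd A B k) = fun _ => (0 : 𝔸) := by
      funext k
      cases k with
      | zero => simp [dd_zero]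
      | succ m => simp [zero_pow (Nat.succ_ne_zero m)]
    rw [h]
    exact summable_zero
  have ht : t ∈ ball (0:ℝ) r := by
    rw [mem_ball, dist_zero_right, Real.norm_eq_abs, hr]
    linarith
  have h0 : (0:ℝ) ∈ ball (0:ℝ) r := mem_ball_self (by linarith)
  have H := hasDerivAt_tsum_of_isPreconnected husum isOpen_ball
    (convex_ball (0:ℝ) r).isPreconnected hder hbound h0 h0sum ht
  have hsum' : Summable (fun k => f' k t) :=
    Summable.of_norm_bounded husum (fun k => hbound k t ht)
  have hGsum : Summable (fun k : ℕ => ((k ! : ℝ)⁻¹ * t ^ k) • dd A B k) := summable_smul_dd A B t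
  have hexpsum : Summable (fun k : ℕ => ((k ! : ℝ)⁻¹ * t ^ k) • A ^ k) := summable_exp_smul A t
  have hval : (∑' k, f' k t) = B * exp (t • A) + A * GG A B t := by
    rw [Summable.tsum_eq_zero_add hsum']
    have hzero : f' 0 t = 0 := by simp [hf']
    rw [hzero, zero_add]
    have hterm : ∀ k : ℕ, f' (k + 1) t
        = B * (((k ! : ℝ)⁻¹ * t ^ k) • A ^ k) + A * (((k ! : ℝ)⁻¹ * t ^ k) • dd A B k) := by
      intro k
      have hcoef : (((k + 1) ! : ℝ)⁻¹ * (((k : ℝ) + 1) * t ^ k)) = (k ! : ℝ)⁻¹ * t ^ k := by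
        rw [Nat.factorial_succ]
        push_cast
        rw [mul_inv]
        have hk1 : ((k : ℝ) + 1) ≠ 0 := by positivity
        field_simp
      simp only [hf', Nat.add_sub_cancel, Nat.cast_add, Nat.cast_one]
      rw [hcoef, dd_succ, smul_add, mul_smul_comm, mul_smul_comm]
    rw [tsum_congr hterm, Summable.tsum_add (hexpsum.mul_left B) (hGsum.mul_left A),
      (hexpsum.tsum_mul_left B), (hGsum.tsum_mul_left A), ← exp_eq_tsum_smul, GG]
  rw [← hval]
  have hfun : GG A B = fun w => ∑' k : ℕ, ((k ! : ℝ)⁻¹ * w ^ k) • dd A B k := rfl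
  rw [hfun]
  exact H

/-- The derivative of `y ↦ exp (s • v y)` at `x` equals `GG (v x) (deriv v x) s`. -/
lemma hasDerivAt_exp_comp {v : ℝ → 𝔸} (hv : ContDiff ℝ 1 v) (x s : ℝ) :
    HasDerivAt (fun y => exp (s • v y)) (GG (v x) (deriv v x) s) x := by
  have hvd : Differentiable ℝ v := hv.differentiable one_ne_zero
  have hdc : Continuous (deriv v) := hv.continuous_deriv le_rfl
  obtain ⟨M1, hM1⟩ := (isCompact_closedBall x 1).exists_bound_of_continuousOn
    hvd.continuous.continuousOn
  obtain ⟨M2, hM2⟩ := (isCompact_closedBall x 1).exists_bound_of_continuousOn hdc.continuousOn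
  have hM10 : 0 ≤ M1 := le_trans (norm_nonneg (v x)) (hM1 x (mem_closedBall_self zero_le_one))
  have hM20 : 0 ≤ M2 := le_trans (norm_nonneg _) (hM2 x (mem_closedBall_self zero_le_one))
  set N : ℝ := M1 + 1 with hN
  have hN1 : (1:ℝ) ≤ N := le_add_of_nonneg_left hM10
  have hq0 : (0:ℝ) ≤ (|s| + 1) * N := by
    have : (0:ℝ) ≤ N := zero_le_one.trans hN1
    positivity
  set g : ℕ → ℝ → 𝔸 := fun k y => ((k ! : ℝ)⁻¹ * s ^ k) • v y ^ k with hg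
  set g' : ℕ → ℝ → 𝔸 := fun k y =>
    ((k ! : ℝ)⁻¹ * s ^ k) • ∑ i ∈ Finset.range k, v y ^ i * deriv v y * v y ^ (k - 1 - i)
    with hg'
  set uu : ℕ → ℝ := fun k => M2 * ((k : ℝ) ^ 2 * ((|s| + 1) * N) ^ k / (k ! : ℝ)) with huu
  have husum : Summable uu := (summable_master 2 hq0).mul_left M2
  have hder : ∀ (k : ℕ) (y : ℝ), y ∈ ball x 1 → HasDerivAt (g k) (g' k y) y := fun k y _ =>
    (hasDerivAt_pow_comp hvd k y).const_smul ((k ! : ℝ)⁻¹ * s ^ k)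
  have hbound : ∀ (k : ℕ) (y : ℝ), y ∈ ball x 1 → ‖g' k y‖ ≤ uu k := by
    intro k y hy
    have hy' : y ∈ closedBall x 1 := ball_subset_closedBall hy
    have hvy : ‖v y‖ ≤ N := le_trans (hM1 y hy') (by rw [hN]; linarith)
    have hby : ‖deriv v y‖ ≤ M2 := hM2 y hy'
    simp only [hg', huu]
    rw [norm_smul, Real.norm_eq_abs, abs_mul, abs_pow, abs_inv,
      abs_of_nonneg (by positivity : (0:ℝ) ≤ (k ! : ℝ))]
    calc (k ! : ℝ)⁻¹ * |s| ^ k * ‖∑ i ∈ Finset.range k, v y ^ i * deriv v y * v y ^ (k - 1 - i)‖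
        ≤ (k ! : ℝ)⁻¹ * |s| ^ k * ((k : ℝ) * (N ^ (k - 1) * M2)) := by
          refine mul_le_mul_of_nonneg_left (norm_dsum_le (v y) (deriv v y) hvy hN1 hby k) ?_
          positivity
      _ ≤ M2 * ((k : ℝ) ^ 2 * ((|s| + 1) * N) ^ k / (k ! : ℝ)) :=
          coef_bound k (abs_nonneg s) (by linarith [abs_nonneg s]) hN1 hM20
  have hxsum : Summable (fun k => g k x) := by
    simp only [hg]
    exact summable_exp_smul (v x) s
  have hx : x ∈ ball x 1 := mem_ball_self one_pos
  have H := hasDerivAt_tsum_of_isPreconnected husum isOpen_ball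
    (convex_ball x 1).isPreconnected hder hbound hx hxsum hx
  have hfun : (fun y => exp (s • v y)) = fun y => ∑' k : ℕ, g k y := by
    funext y
    rw [exp_eq_tsum ℝ]
    exact tsum_congr fun k => by rw [smul_pow, smul_smul]
  rw [hfun]
  have hval : (∑' k, g' k x) = GG (v x) (deriv v x) s := rfl
  rw [← hval]
  exact H

/-- Derivative of the conjugated commutator term. -/
lemma commutator_ode_of_deriv {A B : 𝔸} {h : ℝ → 𝔸} (t : ℝ)
    (hh : HasDerivAt h (B + (A * h t - h t * A)) t) :
    HasDerivAt (fun u => A * h u - h u * A)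
      (A * (A * h t - h t * A) - (A * h t - h t * A) * A + (A * B - B * A)) t := by
  have h3 := (hh.const_mul A).sub (hh.mul_const A)
  refine h3.congr_deriv ?_
  noncomm_ring

end Stmt4Aux

open Stmt4Aux in
/-- The commutator identity
`[v x, (d/dy exp (s • v y))|_x * exp (-(s • v x))] =
  exp (s • v x) * (deriv v x) * exp (-(s • v x)) - deriv v x`
for a `C¹` matrix-valued path `v`, where `[a, b] = a * b - b * a`. -/
theorem stmt_4 (n : ℕ) (hn : 0 < n) (v : ℝ → Matrix (Fin n) (Fin n) ℂ)
    (hv : ContDiff ℝ 1 v) (x s : ℝ) :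
    v x * ((deriv (fun y => NormedSpace.exp (s • v y)) x) * NormedSpace.exp (-(s • v x))) -
        ((deriv (fun y => NormedSpace.exp (s • v y)) x) * NormedSpace.exp (-(s • v x))) * v x =
      NormedSpace.exp (s • v x) * (deriv v x) * NormedSpace.exp (-(s • v x)) - deriv v x := by
  haveI : Nonempty (Fin n) := ⟨⟨0, hn⟩⟩
  erw [(hasDerivAt_exp_comp hv x s).deriv]
  set A := v x with hA
  set B := deriv v x with hB
  -- the conjugated derivative function
  have hh : ∀ t : ℝ, HasDerivAt (fun u => GG A B u * NormedSpace.exp (-(u • A)))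
      (B + (A * (GG A B t * NormedSpace.exp (-(t • A)))
        - (GG A B t * NormedSpace.exp (-(t • A))) * A)) t := by
    intro t
    have h1 := (hasDerivAt_GG A B t).mul (hasDerivAt_expE_neg A t)
    refine h1.congr_deriv ?_
    rw [commA_exp_neg]
    have h2 : (B * NormedSpace.exp (t • A) + A * GG A B t) * NormedSpace.exp (-(t • A))
        + GG A B t * -(NormedSpace.exp (-(t • A)) * A)
        = B * (NormedSpace.exp (t • A) * NormedSpace.exp (-(t • A)))
          + (A * (GG A B t * NormedSpace.exp (-(t • A)))
            - (GG A B t * NormedSpace.exp (-(t • A))) * A) := by noncomm_ring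
    erw [h2, exp_mul_exp_neg, mul_one]
  have hL : ∀ t : ℝ, HasDerivAt
      (fun u => A * (GG A B u * NormedSpace.exp (-(u • A)))
        - (GG A B u * NormedSpace.exp (-(u • A))) * A)
      (A * (A * (GG A B t * NormedSpace.exp (-(t • A)))
          - (GG A B t * NormedSpace.exp (-(t • A))) * A)
        - (A * (GG A B t * NormedSpace.exp (-(t • A)))
          - (GG A B t * NormedSpace.exp (-(t • A))) * A) * A
        + (A * B - B * A)) t := fun t => commutator_ode_of_deriv t (hh t)
  have hR : ∀ t : ℝ, HasDerivAt
      (fun u => NormedSpace.exp (u • A) * B * NormedSpace.exp (-(u • A)) - B)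
      (A * (NormedSpace.exp (t • A) * B * NormedSpace.exp (-(t • A)) - B)
        - (NormedSpace.exp (t • A) * B * NormedSpace.exp (-(t • A)) - B) * A
        + (A * B - B * A)) t := by
    intro t
    have h4 := (((hasDerivAt_expE A t).mul_const B).mul (hasDerivAt_expE_neg A t)).sub_const B
    refine h4.congr_deriv ?_
    rw [commA_exp_neg]
    noncomm_ring
  have h0 : A * (GG A B 0 * NormedSpace.exp (-((0:ℝ) • A)))
      - (GG A B 0 * NormedSpace.exp (-((0:ℝ) • A))) * A
      = NormedSpace.exp ((0:ℝ) • A) * B * NormedSpace.exp (-((0:ℝ) • A)) - B := by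
    simp [GG_zero, NormedSpace.exp_zero]
  exact eq_of_commutator_ode hL hR h0 s
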